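/- arXiv:1210.7348 — 2 statements merged into one kernel-verified Lean document; each statement's English description precedes it below -/
import Mathlib

section
/- Let H be a Hilbert space, F : D(F) ⊆ H → H with Fréchet derivative F'(f), and suppose F satisfies the tangential cone condition ‖F(f̃)−F(f)−F'(f)(f̃−f)‖ ≤ η‖F(f̃)−F(f)‖ for all f, f̃ in a ball B_ρ(f₀) ⊆ D(F), with 0 < η < 1/2. Let f* ∈ B_ρ(f₀) solve F(f*) = g, let ‖g − g^δ‖ ≤ δ, and suppose ‖F'(f)‖ ≤ 1 on B_ρ(f₀). If f_{k+1} = f_k + F'(f_k)*(g^δ − F(f_k)) and ‖g^δ − F(f_k)‖ ≥ τδ with τ > 2(1+η)/(1−2η), then ‖f_{k+1} − f*‖ ≤ ‖f_k − f*‖ whenever f_k ∈ B_ρ(f₀). -/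
theorem stmt8_aux (R S I1 I2 d e E2 : ℝ) (h1 : I1 ≤ d * R)
    (h2 : I2 ≤ e * (d + R) * R) (h3 : S^2 ≤ R^2)
    (h4 : 0 ≤ R * ((1 - 2*e) * R - 2*(1+e)*d)) :
    E2 + 2 * (-(R^2) + I1 + I2) + S^2 ≤ E2 := by nlinarith

/-- Monotonicity of the Landweber iteration error under the
tangential cone condition (η < 1/2), scaling ‖F'(f)‖ ≤ 1, and the discrepancy
condition ‖g^δ − F(f_k)‖ ≥ τδ with τ > 2(1+η)/(1−2η). -/
theorem stmt8 {H : Type*} [NormedAddCommGroup H] [InnerProductSpace ℝ H]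
    [CompleteSpace H]
    (F : H → H) (F' : H → H →L[ℝ] H)
    (f₀ : H) (ρ : ℝ) (hρ : 0 < ρ)
    (η : ℝ) (hη0 : 0 < η) (hη : η < 1 / 2)
    (htcc : ∀ f ∈ Metric.closedBall f₀ ρ, ∀ ftilde ∈ Metric.closedBall f₀ ρ,
      ‖F ftilde - F f - F' f (ftilde - f)‖ ≤ η * ‖F ftilde - F f‖)
    (hF'le : ∀ f ∈ Metric.closedBall f₀ ρ, ‖F' f‖ ≤ 1)
    (fstar : H) (hfstar : fstar ∈ Metric.closedBall f₀ ρ)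
    (g gδ : H) (hsol : F fstar = g)
    (δ : ℝ) (hδ : 0 ≤ δ) (hnoise : ‖g - gδ‖ ≤ δ)
    (τ : ℝ) (hτ : τ > 2 * (1 + η) / (1 - 2 * η))
    (fk fk1 : H) (hfk : fk ∈ Metric.closedBall f₀ ρ)
    (hstep : fk1 = fk + (ContinuousLinearMap.adjoint (F' fk)) (gδ - F fk))
    (hdisc : ‖gδ - F fk‖ ≥ τ * δ) :
    ‖fk1 - fstar‖ ≤ ‖fk - fstar‖ := by
  have hη2 : (0:ℝ) < 1 - 2*η := by linarith
  have hτ2 : 2*(1+η) < τ*(1-2*η) := by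
    have := (div_lt_iff₀ hη2).mp hτ
    linarith [this]
  set e := fk - fstar with he
  set r := gδ - F fk with hr
  set A := F' fk with hA
  set s := (ContinuousLinearMap.adjoint A) r with hs
  set v := F fstar - F fk - A (fstar - fk) with hv
  have hrnn : (0:ℝ) ≤ ‖r‖ := norm_nonneg _
  have hAe : A e = -r + (gδ - g) + v := by
    have h1 : e = -(fstar - fk) := by rw [he]; abel
    rw [h1, map_neg, hv, hsol, hr]
    abel
  have hvle : ‖v‖ ≤ η * ‖g - F fk‖ := by
    have h := htcc fk hfk fstar hfstar
    rw [hsol] at h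
    rw [hv, hA, hsol]
    exact h
  have hgF : ‖g - F fk‖ ≤ δ + ‖r‖ := by
    have h1 : g - F fk = (g - gδ) + r := by rw [hr]; abel
    calc ‖g - F fk‖ = ‖(g - gδ) + r‖ := by rw [h1]
      _ ≤ ‖g - gδ‖ + ‖r‖ := norm_add_le _ _
      _ ≤ δ + ‖r‖ := by linarith
  have hvle' : ‖v‖ ≤ η * (δ + ‖r‖) := by
    calc ‖v‖ ≤ η * ‖g - F fk‖ := hvle
      _ ≤ η * (δ + ‖r‖) := mul_le_mul_of_nonneg_left hgF hη0.le
  have hsle : ‖s‖ ≤ ‖r‖ := by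
    calc ‖s‖ ≤ ‖ContinuousLinearMap.adjoint A‖ * ‖r‖ := (ContinuousLinearMap.adjoint A).le_opNorm r
      _ = ‖A‖ * ‖r‖ := by rw [LinearIsometryEquiv.norm_map]
      _ ≤ 1 * ‖r‖ := mul_le_mul_of_nonneg_right (hF'le fk hfk) hrnn
      _ = ‖r‖ := one_mul _
  have hinner : inner ℝ e s = (-(‖r‖^2) + inner ℝ (gδ - g) r + inner ℝ v r : ℝ) := by
    rw [hs, ContinuousLinearMap.adjoint_inner_right, hAe]
    rw [inner_add_left, inner_add_left, inner_neg_left, real_inner_self_eq_norm_sq]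
  have hi1 : (inner ℝ (gδ - g) r : ℝ) ≤ δ * ‖r‖ := by
    calc (inner ℝ (gδ - g) r : ℝ) ≤ ‖gδ - g‖ * ‖r‖ := real_inner_le_norm _ _
      _ ≤ δ * ‖r‖ := mul_le_mul_of_nonneg_right (by rw [norm_sub_rev]; exact hnoise) hrnn
  have hi2 : (inner ℝ v r : ℝ) ≤ η * (δ + ‖r‖) * ‖r‖ := by
    calc (inner ℝ v r : ℝ) ≤ ‖v‖ * ‖r‖ := real_inner_le_norm _ _
      _ ≤ η * (δ + ‖r‖) * ‖r‖ := mul_le_mul_of_nonneg_right hvle' hrnn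
  have hsq : ‖fk1 - fstar‖^2 = ‖e‖^2 + 2 * (-(‖r‖^2) + inner ℝ (gδ - g) r + inner ℝ v r) + ‖s‖^2 := by
    have h1 : fk1 - fstar = e + s := by rw [hstep, he, hs, hr, hA]; abel
    rw [h1, @norm_add_sq_real, hinner]
  have hRd : 2*(1+η)*δ ≤ (1-2*η)*‖r‖ := by
    have h1 := mul_le_mul_of_nonneg_left hdisc hη2.le
    have h2 := mul_le_mul_of_nonneg_right hτ2.le hδ
    have h3 : (1-2*η)*(τ*δ) = τ*(1-2*η)*δ := by ring
    linarith
  have hprod : 0 ≤ ‖r‖ * ((1-2*η)*‖r‖ - 2*(1+η)*δ) :=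
    mul_nonneg hrnn (by linarith)
  have hs2 : ‖s‖^2 ≤ ‖r‖^2 := pow_le_pow_left₀ (norm_nonneg s) hsle 2
  have hkey : ‖fk1 - fstar‖^2 ≤ ‖fk - fstar‖^2 := by
    rw [hsq, he]
    exact stmt8_aux _ _ _ _ _ _ _ hi1 hi2 hs2 hprod
  calc ‖fk1 - fstar‖ = Real.sqrt (‖fk1 - fstar‖^2) := (Real.sqrt_sq (norm_nonneg _)).symm
    _ ≤ Real.sqrt (‖fk - fstar‖^2) := Real.sqrt_le_sqrt hkey
    _ = ‖fk - fstar‖ := Real.sqrt_sq (norm_nonneg _)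
end

section
/- Under the hypotheses of the monotonicity result for Landweber iteration (tangential cone condition with η < 1/2, ‖F'‖ ≤ 1, exact solution f* ∈ B_ρ(f₀), stopping rule ‖g^δ−F(f_k)‖ ≥ τδ with τ > 2(1+η)/(1−2η)): the stopping index k_* satisfies k_* (τδ)² ≤ Σ_{k=0}^{k_*−1} ‖g^δ − F(f_k)‖² ≤ τ ‖f* − f₀‖² / ((1−2η)τ − 2(1+η)). In particular k_* is finite for δ > 0. -/
set_option maxHeartbeats 800000 in
/-- Bound on the stopping index of the Landweber iteration under
the discrepancy principle:
k_*(τδ)² ≤ Σ_{k<k_*} ‖g^δ − F(f_k)‖² ≤ τ‖f* − f₀‖²/((1−2η)τ − 2(1+η)). -/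
theorem stmt9 {H : Type*} [NormedAddCommGroup H] [InnerProductSpace ℝ H]
    [CompleteSpace H]
    (F : H → H) (F' : H → H →L[ℝ] H)
    (f₀ : H) (ρ : ℝ) (hρ : 0 < ρ)
    (η : ℝ) (hη0 : 0 < η) (hη : η < 1 / 2)
    (htcc : ∀ f ∈ Metric.closedBall f₀ ρ, ∀ ftilde ∈ Metric.closedBall f₀ ρ,
      ‖F ftilde - F f - F' f (ftilde - f)‖ ≤ η * ‖F ftilde - F f‖)
    (hF'le : ∀ f ∈ Metric.closedBall f₀ ρ, ‖F' f‖ ≤ 1)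
    (fstar : H) (hfstar : fstar ∈ Metric.closedBall f₀ ρ)
    (g gδ : H) (hsol : F fstar = g)
    (δ : ℝ) (hδ : 0 < δ) (hnoise : ‖g - gδ‖ ≤ δ)
    (τ : ℝ) (hτ : τ > 2 * (1 + η) / (1 - 2 * η))
    (f : ℕ → H) (hf0 : f 0 = f₀)
    (hstep : ∀ k, f (k + 1) = f k + (ContinuousLinearMap.adjoint (F' (f k))) (gδ - F (f k)))
    (hball : ∀ k, f k ∈ Metric.closedBall f₀ ρ)
    (kstar : ℕ) (hkstar : ∀ k < kstar, ‖gδ - F (f k)‖ ≥ τ * δ) :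
    (kstar : ℝ) * (τ * δ) ^ 2 ≤ ∑ k ∈ Finset.range kstar, ‖gδ - F (f k)‖ ^ 2 ∧
      ∑ k ∈ Finset.range kstar, ‖gδ - F (f k)‖ ^ 2 ≤
        τ * ‖fstar - f₀‖ ^ 2 / ((1 - 2 * η) * τ - 2 * (1 + η)) := by
  have h2η : (0:ℝ) < 1 - 2 * η := by linarith
  have hτ0 : 0 < τ := lt_trans (div_pos (by linarith) h2η) hτ
  have hc : 0 < (1 - 2 * η) * τ - 2 * (1 + η) := by
    have := (div_lt_iff₀ h2η).mp hτ
    nlinarith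
  have key : ∀ k < kstar, ((1 - 2 * η) * τ - 2 * (1 + η)) * ‖gδ - F (f k)‖ ^ 2 ≤
      τ * (‖f k - fstar‖ ^ 2 - ‖f (k+1) - fstar‖ ^ 2) := by
    intro k hk
    have hstep' : f (k+1) - fstar =
        (f k - fstar) + (ContinuousLinearMap.adjoint (F' (f k))) (gδ - F (f k)) := by
      rw [hstep k]; abel
    have hnormA : ‖(ContinuousLinearMap.adjoint (F' (f k))) (gδ - F (f k))‖ ≤ ‖gδ - F (f k)‖ := by
      calc ‖(ContinuousLinearMap.adjoint (F' (f k))) (gδ - F (f k))‖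
          ≤ ‖ContinuousLinearMap.adjoint (F' (f k))‖ * ‖gδ - F (f k)‖ :=
            (ContinuousLinearMap.adjoint (F' (f k))).le_opNorm _
        _ ≤ 1 * ‖gδ - F (f k)‖ := by
            apply mul_le_mul_of_nonneg_right _ (norm_nonneg _)
            rw [LinearIsometryEquiv.norm_map ContinuousLinearMap.adjoint (F' (f k))]
            exact hF'le (f k) (hball k)
        _ = ‖gδ - F (f k)‖ := one_mul _
    have hexp : ‖f (k+1) - fstar‖ ^ 2 = ‖f k - fstar‖ ^ 2
        + 2 * inner ℝ (f k - fstar) ((ContinuousLinearMap.adjoint (F' (f k))) (gδ - F (f k)))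
        + ‖(ContinuousLinearMap.adjoint (F' (f k))) (gδ - F (f k))‖ ^ 2 := by
      rw [hstep']; exact norm_add_sq_real _ _
    have hadj : (inner ℝ (f k - fstar) ((ContinuousLinearMap.adjoint (F' (f k))) (gδ - F (f k))) : ℝ)
        = inner ℝ ((F' (f k)) (f k - fstar)) (gδ - F (f k)) :=
      ContinuousLinearMap.adjoint_inner_right (F' (f k)) _ _
    have hTbd : ‖g - F (f k) - (F' (f k)) (fstar - f k)‖ ≤ η * ‖g - F (f k)‖ := by
      have h := htcc (f k) (hball k) fstar hfstar
      rwa [hsol] at h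
    have hAe : (F' (f k)) (f k - fstar) =
        (g - F (f k) - (F' (f k)) (fstar - f k)) - (g - F (f k)) := by
      rw [map_sub, map_sub]; abel
    have hinner : (inner ℝ ((F' (f k)) (f k - fstar)) (gδ - F (f k)) : ℝ)
        = inner ℝ (g - F (f k) - (F' (f k)) (fstar - f k)) (gδ - F (f k))
          - inner ℝ (g - gδ) (gδ - F (f k)) - ‖gδ - F (f k)‖ ^ 2 := by
      rw [hAe]
      have hg : g - F (f k) = (g - gδ) + (gδ - F (f k)) := by abel
      rw [inner_sub_left]
      nth_rewrite 2 [hg]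
      rw [inner_add_left, real_inner_self_eq_norm_sq]
      ring
    have hTr : (inner ℝ (g - F (f k) - (F' (f k)) (fstar - f k)) (gδ - F (f k)) : ℝ)
        ≤ η * ‖g - F (f k)‖ * ‖gδ - F (f k)‖ :=
      le_trans (real_inner_le_norm _ _) (mul_le_mul_of_nonneg_right hTbd (norm_nonneg _))
    have hgr : -(δ * ‖gδ - F (f k)‖) ≤ (inner ℝ (g - gδ) (gδ - F (f k)) : ℝ) := by
      have h1 := abs_real_inner_le_norm (g - gδ) (gδ - F (f k))
      have h2 := neg_abs_le (inner ℝ (g - gδ) (gδ - F (f k)) : ℝ)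
      have h3 : ‖g - gδ‖ * ‖gδ - F (f k)‖ ≤ δ * ‖gδ - F (f k)‖ :=
        mul_le_mul_of_nonneg_right hnoise (norm_nonneg _)
      linarith
    have hgF : ‖g - F (f k)‖ ≤ δ + ‖gδ - F (f k)‖ := by
      calc ‖g - F (f k)‖ = ‖(g - gδ) + (gδ - F (f k))‖ := by congr 1; abel
        _ ≤ ‖g - gδ‖ + ‖gδ - F (f k)‖ := norm_add_le _ _
        _ ≤ δ + ‖gδ - F (f k)‖ := by linarith
    have hr0 : (0:ℝ) ≤ ‖gδ - F (f k)‖ := norm_nonneg _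
    have hη' : η * ‖g - F (f k)‖ * ‖gδ - F (f k)‖
        ≤ η * (δ + ‖gδ - F (f k)‖) * ‖gδ - F (f k)‖ :=
      mul_le_mul_of_nonneg_right (mul_le_mul_of_nonneg_left hgF hη0.le) hr0
    have hA2 : ‖(ContinuousLinearMap.adjoint (F' (f k))) (gδ - F (f k))‖ ^ 2
        ≤ ‖gδ - F (f k)‖ ^ 2 := by
      nlinarith [norm_nonneg ((ContinuousLinearMap.adjoint (F' (f k))) (gδ - F (f k)))]
    have hI : (inner ℝ (f k - fstar) ((ContinuousLinearMap.adjoint (F' (f k))) (gδ - F (f k))) : ℝ)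
        ≤ η * (δ + ‖gδ - F (f k)‖) * ‖gδ - F (f k)‖ + δ * ‖gδ - F (f k)‖
          - ‖gδ - F (f k)‖ ^ 2 := by
      rw [hadj, hinner]; linarith
    have hstepest : ‖f (k+1) - fstar‖ ^ 2 ≤ ‖f k - fstar‖ ^ 2
        - (1 - 2 * η) * ‖gδ - F (f k)‖ ^ 2 + 2 * (1 + η) * δ * ‖gδ - F (f k)‖ := by
      rw [hexp]; nlinarith [hI, hA2]
    have hdisc : τ * δ * ‖gδ - F (f k)‖ ≤ ‖gδ - F (f k)‖ ^ 2 := by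
      have h := hkstar k hk
      nlinarith
    have h5 : τ * ((1 - 2 * η) * ‖gδ - F (f k)‖ ^ 2 - 2 * (1 + η) * δ * ‖gδ - F (f k)‖)
        ≤ τ * (‖f k - fstar‖ ^ 2 - ‖f (k+1) - fstar‖ ^ 2) :=
      mul_le_mul_of_nonneg_left (by linarith) hτ0.le
    have h6 : 2 * (1 + η) * (τ * δ * ‖gδ - F (f k)‖) ≤ 2 * (1 + η) * ‖gδ - F (f k)‖ ^ 2 :=
      mul_le_mul_of_nonneg_left hdisc (by linarith)
    nlinarith [h5, h6]
  constructor
  · have h : ∀ k ∈ Finset.range kstar, (τ * δ) ^ 2 ≤ ‖gδ - F (f k)‖ ^ 2 := by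
      intro k hk
      have h1 := hkstar k (Finset.mem_range.mp hk)
      have h2 : 0 ≤ τ * δ := (mul_pos hτ0 hδ).le
      nlinarith
    have h' := Finset.sum_le_sum h
    simpa [Finset.sum_const, Finset.card_range, nsmul_eq_mul] using h'
  · have hsum : ((1 - 2 * η) * τ - 2 * (1 + η)) * ∑ k ∈ Finset.range kstar, ‖gδ - F (f k)‖ ^ 2
        ≤ τ * ‖fstar - f₀‖ ^ 2 := by
      rw [Finset.mul_sum]
      calc ∑ k ∈ Finset.range kstar, ((1 - 2 * η) * τ - 2 * (1 + η)) * ‖gδ - F (f k)‖ ^ 2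
          ≤ ∑ k ∈ Finset.range kstar, τ * (‖f k - fstar‖ ^ 2 - ‖f (k+1) - fstar‖ ^ 2) :=
            Finset.sum_le_sum fun k hk => key k (Finset.mem_range.mp hk)
        _ = τ * (‖f 0 - fstar‖ ^ 2 - ‖f kstar - fstar‖ ^ 2) := by
            rw [← Finset.mul_sum, Finset.sum_range_sub' (fun k => ‖f k - fstar‖ ^ 2) kstar]
        _ ≤ τ * ‖fstar - f₀‖ ^ 2 := by
            have h1 : ‖f 0 - fstar‖ = ‖fstar - f₀‖ := by rw [hf0, norm_sub_rev]
            have h2 : (0:ℝ) ≤ ‖f kstar - fstar‖ ^ 2 := sq_nonneg _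
            rw [h1]
            nlinarith
    rw [le_div_iff₀ hc]
    nlinarith [hsum]
end
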